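/- For every p, q > 0 there exists a sequence (a_n)_{n≥1} of real numbers such that (A_N^{p,q})^{-1}·∑_{n=1}^{N} w_{p,q}(n/N)·a_n converges to 0 as N → ∞, but the Cesàro averages (1/N)·∑_{n=1}^{N} a_n do not converge as N → ∞. In particular, convergence of the weighted averages does not imply convergence of the unweighted Birkhoff averages. -/

import Mathlib

open MeasureTheory Filter

/-- The weighting function `w_{p,q}`. -/
noncomputable def wpq (p q : ℝ) (x : ℝ) : ℝ :=
  if x ∈ Set.Ioo (0 : ℝ) 1 then
    (∫ s in (0:ℝ)..1, Real.exp (-(s ^ (-p) * (1 - s) ^ (-q))))⁻¹ *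
      Real.exp (-(x ^ (-p) * (1 - x) ^ (-q)))
  else 0

/-- The normalizer `A_N^{p,q} = ∑_{n=0}^{N-1} w_{p,q}(n/N)`. -/
noncomputable def Apq (p q : ℝ) (N : ℕ) : ℝ :=
  ∑ n ∈ Finset.range N, wpq p q ((n : ℝ) / N)


/-- `t^m e^{-t} ≤ m^m` for `t ≥ 0`, `m ≥ 1`. -/
lemma aux_pow_mul_exp_neg_le (m : ℕ) (hm : m ≠ 0) {t : ℝ} (ht : 0 ≤ t) :
    t ^ m * Real.exp (-t) ≤ (m : ℝ) ^ m := by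
  have hm' : (0:ℝ) < m := by exact_mod_cast Nat.pos_of_ne_zero hm
  have h1 : t / m ≤ Real.exp (t / m) := by
    have := Real.add_one_le_exp (t / m); linarith
  have h2 : (t / m) ^ m ≤ Real.exp (t / m) ^ m :=
    pow_le_pow_left₀ (by positivity) h1 m
  have h3 : Real.exp (t / m) ^ m = Real.exp t := by
    rw [← Real.exp_nat_mul]; congr 1; field_simp
  have h4 : (t / m) ^ m = t ^ m / (m : ℝ) ^ m := div_pow t _ m
  rw [h3, h4] at h2
  have h5 : t ^ m ≤ Real.exp t * (m:ℝ) ^ m := by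
    rw [div_le_iff₀ (by positivity)] at h2; linarith
  have h6 : Real.exp (-t) ≤ 1 := Real.exp_le_one_iff.2 (by linarith)
  have h7 : (0:ℝ) < Real.exp (-t) := Real.exp_pos _
  calc t ^ m * Real.exp (-t) ≤ (Real.exp t * (m:ℝ)^m) * Real.exp (-t) := by
        apply mul_le_mul_of_nonneg_right h5 h7.le
    _ = (m:ℝ)^m * (Real.exp t * Real.exp (-t)) := by ring
    _ = (m:ℝ)^m := by rw [← Real.exp_add]; simp

noncomputable def cInt (p q : ℝ) : ℝ :=
  ∫ s in (0:ℝ)..1, Real.exp (-(s ^ (-p) * (1 - s) ^ (-q)))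

lemma cInt_pos (p q : ℝ) : 0 < cInt p q := by
  apply intervalIntegral.intervalIntegral_pos_of_pos_on
  · rw [intervalIntegrable_iff, Set.uIoc_of_le (by norm_num : (0:ℝ) ≤ 1)]
    apply Measure.integrableOn_of_bounded (M := 1) measure_Ioc_lt_top.ne
    · apply Measurable.aestronglyMeasurable
      exact ((((measurable_id.pow measurable_const)).mul
        (((measurable_const.sub measurable_id)).pow measurable_const)).neg).exp
    · filter_upwards [ae_restrict_mem measurableSet_Ioc] with x hx
      rw [Real.norm_eq_abs, abs_of_pos (Real.exp_pos _)]
      apply Real.exp_le_one_iff.2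
      have h1 : 0 ≤ x ^ (-p) := Real.rpow_nonneg hx.1.le _
      have h2 : 0 ≤ (1 - x) ^ (-q) := Real.rpow_nonneg (by linarith [hx.2]) _
      nlinarith
  · intro x _; positivity
  · norm_num

lemma wpq_of_mem (p q : ℝ) {x : ℝ} (hx : x ∈ Set.Ioo (0:ℝ) 1) :
    wpq p q x = (cInt p q)⁻¹ * Real.exp (-(x ^ (-p) * (1 - x) ^ (-q))) := by
  rw [wpq, if_pos hx]; rfl

lemma wpq_of_not_mem (p q : ℝ) {x : ℝ} (hx : x ∉ Set.Ioo (0:ℝ) 1) :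
    wpq p q x = 0 := by rw [wpq, if_neg hx]

lemma wpq_one (p q : ℝ) : wpq p q 1 = 0 :=
  wpq_of_not_mem p q (by simp)

lemma wpq_nonneg (p q : ℝ) (x : ℝ) : 0 ≤ wpq p q x := by
  by_cases hx : x ∈ Set.Ioo (0:ℝ) 1
  · rw [wpq_of_mem p q hx]
    have := cInt_pos p q
    positivity
  · rw [wpq_of_not_mem p q hx]

lemma wpq_ge (p q : ℝ) (hp : 0 < p) (hq : 0 < q) {x : ℝ}
    (hx1 : 1/3 ≤ x) (hx2 : x ≤ 2/3) :
    (cInt p q)⁻¹ * Real.exp (-((3:ℝ) ^ p * 3 ^ q)) ≤ wpq p q x := by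
  have hx0 : (0:ℝ) < x := by linarith
  have hx1' : x < 1 := by linarith
  rw [wpq_of_mem p q ⟨hx0, hx1'⟩]
  have hc := cInt_pos p q
  have key : x ^ (-p) * (1 - x) ^ (-q) ≤ (3:ℝ) ^ p * 3 ^ q := by
    have e3 : ((1:ℝ)/3) ^ (-p) = (3:ℝ) ^ p := by
      rw [one_div, Real.inv_rpow (by norm_num), Real.rpow_neg (by norm_num), inv_inv]
    have e3' : ((1:ℝ)/3) ^ (-q) = (3:ℝ) ^ q := by
      rw [one_div, Real.inv_rpow (by norm_num), Real.rpow_neg (by norm_num), inv_inv]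
    have h1 : x ^ (-p) ≤ (3:ℝ) ^ p := by
      rw [← e3]
      exact Real.rpow_le_rpow_of_nonpos (by norm_num) hx1 (by linarith)
    have h2 : (1 - x) ^ (-q) ≤ (3:ℝ) ^ q := by
      rw [← e3']
      exact Real.rpow_le_rpow_of_nonpos (by norm_num) (by linarith) (by linarith)
    have h1n : 0 ≤ x ^ (-p) := Real.rpow_nonneg hx0.le _
    have h2n : 0 ≤ (1 - x) ^ (-q) := Real.rpow_nonneg (by linarith) _
    have h3 : (0:ℝ) ≤ 3 ^ p := Real.rpow_nonneg (by norm_num) _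
    nlinarith
  have : Real.exp (-((3:ℝ) ^ p * 3 ^ q)) ≤ Real.exp (-(x ^ (-p) * (1 - x) ^ (-q))) :=
    Real.exp_le_exp.2 (by linarith)
  have hcinv : 0 < (cInt p q)⁻¹ := by positivity
  nlinarith [Real.exp_pos (-((3:ℝ) ^ p * 3 ^ q))]

lemma apq_lower (p q : ℝ) (hp : 0 < p) (hq : 0 < q) {N : ℕ} (hN : 4 ≤ N) :
    (N : ℝ) / 6 * ((cInt p q)⁻¹ * Real.exp (-((3:ℝ)^p * 3^q))) ≤ Apq p q N := by
  set m0 : ℝ := (cInt p q)⁻¹ * Real.exp (-((3:ℝ)^p * 3^q)) with hm0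
  have hm0pos : 0 < m0 := by
    have := cInt_pos p q; positivity
  have hNpos : (0:ℝ) < N := by positivity
  set s : Finset ℕ := Finset.Icc (N/3 + 1) ((2*N)/3) with hs
  have hsub : s ⊆ Finset.range N := by
    intro n hn
    rw [Finset.mem_Icc] at hn
    rw [Finset.mem_range]
    omega
  have hlow : ∀ n ∈ s, m0 ≤ wpq p q ((n:ℝ)/N) := by
    intro n hn
    rw [Finset.mem_Icc] at hn
    have h1 : N ≤ 3 * n := by omega
    have h2 : 3 * n ≤ 2 * N := by omega
    apply wpq_ge p q hp hq
    · rw [div_le_div_iff₀ (by norm_num) hNpos]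
      have : (N:ℝ) ≤ 3 * (n:ℝ) := by exact_mod_cast h1
      linarith
    · rw [div_le_div_iff₀ hNpos (by norm_num)]
      have : 3 * (n:ℝ) ≤ 2 * (N:ℝ) := by exact_mod_cast h2
      linarith
  have hcard : N ≤ 6 * s.card := by
    rw [hs, Nat.card_Icc]
    omega
  calc (N:ℝ)/6 * m0 ≤ (s.card : ℝ) * m0 := by
        apply mul_le_mul_of_nonneg_right _ hm0pos.le
        rw [div_le_iff₀ (by norm_num)]
        calc (N:ℝ) ≤ 6 * s.card := by exact_mod_cast hcard
          _ = (s.card:ℝ) * 6 := by ring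
    _ ≤ ∑ n ∈ s, wpq p q ((n:ℝ)/N) := by
        have := Finset.card_nsmul_le_sum s (fun n => wpq p q ((n:ℝ)/N)) m0 hlow
        simpa [nsmul_eq_mul] using this
    _ ≤ Apq p q N := by
        apply Finset.sum_le_sum_of_subset_of_nonneg hsub
        intro n _ _
        exact wpq_nonneg p q _

lemma wpq_lipschitz (p q : ℝ) (hp : 0 < p) (hq : 0 < q) :
    ∃ L : ℝ, 0 < L ∧ ∀ x y : ℝ, 0 < x → x ≤ y → y ≤ 1 →
      |wpq p q x - wpq p q y| ≤ L * (y - x) := by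
  have hc := cInt_pos p q
  set c := cInt p q with hcdef
  set K : ℕ := ⌈max 1 (max p⁻¹ q⁻¹)⌉₊ with hKdef
  have hKp : p⁻¹ ≤ (K:ℝ) :=
    le_trans (le_trans (le_max_left _ _) (le_max_right _ _)) (Nat.le_ceil _)
  have hKq : q⁻¹ ≤ (K:ℝ) :=
    le_trans (le_trans (le_max_right _ _) (le_max_right _ _)) (Nat.le_ceil _)
  set M : ℕ := K + 1 with hMdef
  have hM0 : M ≠ 0 := Nat.succ_ne_zero _
  have hMK : (K:ℝ) ≤ (M:ℝ) := by exact_mod_cast Nat.le_succ K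
  have hMpos : (0:ℝ) < (M:ℝ) := by
    have : 0 < M := Nat.pos_of_ne_zero hM0
    exact_mod_cast this
  set L : ℝ := c⁻¹ * (p + q + 1) * (M:ℝ) ^ M with hLdef
  have hLpos : 0 < L := by positivity
  set C : ℝ := c⁻¹ * ((p + q) * (M:ℝ) ^ M) with hCdef
  have hCL : C ≤ L := by
    rw [hCdef, hLdef]
    have h1 : (0:ℝ) ≤ (M:ℝ)^M := by positivity
    have h2 : (0:ℝ) < c⁻¹ := by positivity
    nlinarith
  set D : ℝ → ℝ := fun x => c⁻¹ * (Real.exp (-(x ^ (-p) * (1 - x) ^ (-q))) *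
      (-(((-p) * x ^ (-p - 1)) * (1 - x) ^ (-q) +
        x ^ (-p) * ((-q) * (1 - x) ^ (-q - 1) * (0 - 1))))) with hDdef
  have hderiv : ∀ x ∈ Set.Ioo (0:ℝ) 1, HasDerivWithinAt (wpq p q) (D x) (Set.Ioo 0 1) x := by
    intro x hx
    have hx1 : (0:ℝ) < 1 - x := by linarith [hx.2]
    have h1 : HasDerivAt (fun y : ℝ => y ^ (-p)) ((-p) * x ^ (-p - 1)) x :=
      Real.hasDerivAt_rpow_const (Or.inl hx.1.ne')
    have hbase : HasDerivAt (fun y : ℝ => 1 - y) (0 - 1) x :=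
      (hasDerivAt_const x 1).sub (hasDerivAt_id x)
    have h2 : HasDerivAt (fun y : ℝ => (1 - y) ^ (-q))
        ((-q) * (1 - x) ^ (-q - 1) * (0 - 1)) x := by
      have hg : HasDerivAt (fun z : ℝ => z ^ (-q)) ((-q) * (1 - x) ^ (-q - 1)) (1 - x) :=
        Real.hasDerivAt_rpow_const (Or.inl hx1.ne')
      exact hg.comp x hbase
    have h4 := (((h1.mul h2).neg).exp).const_mul c⁻¹
    have heq : ∀ y ∈ Set.Ioo (0:ℝ) 1,
        wpq p q y = c⁻¹ * Real.exp (-(y ^ (-p) * (1 - y) ^ (-q))) :=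
      fun y hy => wpq_of_mem p q hy
    exact (h4.hasDerivWithinAt).congr heq (heq x hx)
  have hbound : ∀ x ∈ Set.Ioo (0:ℝ) 1, ‖D x‖ ≤ C := by
    intro x hx
    have hx1 : (0:ℝ) < 1 - x := by linarith [hx.2]
    simp only [hDdef]
    set A : ℝ := x ^ (-p) with hAdef
    set B : ℝ := (1 - x) ^ (-q) with hBdef
    have hA1 : 1 ≤ A :=
      Real.one_le_rpow_of_pos_of_le_one_of_nonpos hx.1 hx.2.le (by linarith)
    have hB1 : 1 ≤ B :=
      Real.one_le_rpow_of_pos_of_le_one_of_nonpos hx1 (by linarith [hx.1]) (by linarith)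
    have hA0 : (0:ℝ) < A := lt_of_lt_of_le one_pos hA1
    have hB0 : (0:ℝ) < B := lt_of_lt_of_le one_pos hB1
    have hxinv : x⁻¹ ≤ A ^ K := by
      have e1 : A ^ (p⁻¹ : ℝ) = x⁻¹ := by
        rw [hAdef, ← Real.rpow_mul hx.1.le]
        rw [show -p * p⁻¹ = -1 by field_simp, Real.rpow_neg_one]
      calc x⁻¹ = A ^ (p⁻¹ : ℝ) := e1.symm
        _ ≤ A ^ ((K : ℕ) : ℝ) := Real.rpow_le_rpow_of_exponent_le hA1 hKp
        _ = A ^ K := Real.rpow_natCast A K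
    have hyinv : (1 - x)⁻¹ ≤ B ^ K := by
      have e1 : B ^ (q⁻¹ : ℝ) = (1 - x)⁻¹ := by
        rw [hBdef, ← Real.rpow_mul hx1.le]
        rw [show -q * q⁻¹ = -1 by field_simp, Real.rpow_neg_one]
      calc (1 - x)⁻¹ = B ^ (q⁻¹ : ℝ) := e1.symm
        _ ≤ B ^ ((K : ℕ) : ℝ) := Real.rpow_le_rpow_of_exponent_le hB1 hKq
        _ = B ^ K := Real.rpow_natCast B K
    have ex : x ^ (-p - 1) = A * x⁻¹ := by
      rw [show -p - 1 = -p + (-1) by ring, Real.rpow_add hx.1, Real.rpow_neg_one, hAdef]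
    have ey : (1 - x) ^ (-q - 1) = B * (1 - x)⁻¹ := by
      rw [show -q - 1 = -q + (-1) by ring, Real.rpow_add hx1, Real.rpow_neg_one, hBdef]
    have hxp0 : (0:ℝ) ≤ x ^ (-p - 1) := Real.rpow_nonneg hx.1.le _
    have hyp0 : (0:ℝ) ≤ (1 - x) ^ (-q - 1) := Real.rpow_nonneg hx1.le _
    have hAM : A * x⁻¹ ≤ A ^ M := by
      calc A * x⁻¹ ≤ A * A ^ K := mul_le_mul_of_nonneg_left hxinv hA0.le
        _ = A ^ M := by rw [hMdef, pow_succ]; ring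
    have hBM : B * (1 - x)⁻¹ ≤ B ^ M := by
      calc B * (1 - x)⁻¹ ≤ B * B ^ K := mul_le_mul_of_nonneg_left hyinv hB0.le
        _ = B ^ M := by rw [hMdef, pow_succ]; ring
    have hx1e : x ^ (-p - 1) ≤ A ^ M := by rw [ex]; exact hAM
    have hy1e : (1 - x) ^ (-q - 1) ≤ B ^ M := by rw [ey]; exact hBM
    have hBMB : B ≤ B ^ M := le_self_pow₀ hB1 hM0
    have hAMA : A ≤ A ^ M := le_self_pow₀ hA1 hM0
    have habs : |((-p) * x ^ (-p - 1)) * B + A * ((-q) * (1 - x) ^ (-q - 1) * (0 - 1))|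
        ≤ (p + q) * (A * B) ^ M := by
      have e2 : ((-p) * x ^ (-p - 1)) * B + A * ((-q) * (1 - x) ^ (-q - 1) * (0 - 1))
          = -(p * x ^ (-p - 1) * B) + A * (q * (1 - x) ^ (-q - 1)) := by ring
      rw [e2]
      have h1 : |(-(p * x ^ (-p - 1) * B)) + A * (q * (1 - x) ^ (-q - 1))|
          ≤ p * x ^ (-p - 1) * B + A * (q * (1 - x) ^ (-q - 1)) := by
        calc |(-(p * x ^ (-p - 1) * B)) + A * (q * (1 - x) ^ (-q - 1))|
            ≤ |(-(p * x ^ (-p - 1) * B))| + |A * (q * (1 - x) ^ (-q - 1))| := abs_add_le _ _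
          _ = p * x ^ (-p - 1) * B + A * (q * (1 - x) ^ (-q - 1)) := by
              rw [abs_neg, abs_of_nonneg (by positivity), abs_of_nonneg (by positivity)]
      refine h1.trans ?_
      have t1 : p * x ^ (-p - 1) * B ≤ p * (A ^ M * B ^ M) := by
        calc p * x ^ (-p - 1) * B = p * (x ^ (-p - 1) * B) := by ring
          _ ≤ p * (A ^ M * B ^ M) := by
              apply mul_le_mul_of_nonneg_left _ hp.le
              exact mul_le_mul hx1e hBMB hB0.le (by positivity)
      have t2 : A * (q * (1 - x) ^ (-q - 1)) ≤ q * (A ^ M * B ^ M) := by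
        calc A * (q * (1 - x) ^ (-q - 1)) = q * (A * (1 - x) ^ (-q - 1)) := by ring
          _ ≤ q * (A ^ M * B ^ M) := by
              apply mul_le_mul_of_nonneg_left _ hq.le
              exact mul_le_mul hAMA hy1e hyp0 (by positivity)
      calc p * x ^ (-p - 1) * B + A * (q * (1 - x) ^ (-q - 1))
          ≤ p * (A ^ M * B ^ M) + q * (A ^ M * B ^ M) := add_le_add t1 t2
        _ = (p + q) * (A * B) ^ M := by rw [mul_pow]; ring
    have hcinv : (0:ℝ) < c⁻¹ := by positivity
    rw [Real.norm_eq_abs, abs_mul, abs_mul, abs_neg,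
      abs_of_pos hcinv, abs_of_pos (Real.exp_pos _)]
    have h3 := aux_pow_mul_exp_neg_le M hM0 (show (0:ℝ) ≤ A * B by positivity)
    have h2 : Real.exp (-(A * B)) *
        |((-p) * x ^ (-p - 1)) * B + A * ((-q) * (1 - x) ^ (-q - 1) * (0 - 1))|
        ≤ (p + q) * (M:ℝ) ^ M := by
      calc Real.exp (-(A * B)) * _
          ≤ Real.exp (-(A * B)) * ((p + q) * (A * B) ^ M) :=
            mul_le_mul_of_nonneg_left habs (Real.exp_pos _).le
        _ = (p + q) * ((A * B) ^ M * Real.exp (-(A * B))) := by ring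
        _ ≤ (p + q) * ((M:ℝ) ^ M) := by
            apply mul_le_mul_of_nonneg_left h3 (by positivity)
    rw [hCdef]
    exact mul_le_mul_of_nonneg_left h2 hcinv.le
  refine ⟨L, hLpos, ?_⟩
  intro x y hx0 hxy hy1
  rcases eq_or_lt_of_le hy1 with hy1' | hy1'
  · -- y = 1
    subst hy1'
    rcases eq_or_lt_of_le hxy with hxy' | hxy'
    · subst hxy'; simp
    · have hx1 : x < 1 := hxy'
      rw [wpq_one, sub_zero, abs_of_nonneg (wpq_nonneg p q x)]
      have hx1' : (0:ℝ) < 1 - x := by linarith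
      set B : ℝ := (1 - x) ^ (-q) with hBdef
      have hB1 : 1 ≤ B :=
        Real.one_le_rpow_of_pos_of_le_one_of_nonpos hx1' (by linarith) (by linarith)
      have hB0 : (0:ℝ) < B := lt_of_lt_of_le one_pos hB1
      have hA1 : 1 ≤ x ^ (-p) :=
        Real.one_le_rpow_of_pos_of_le_one_of_nonpos hx0 (le_of_lt hx1) (by linarith)
      have hstep1 : wpq p q x ≤ c⁻¹ * Real.exp (-B) := by
        rw [wpq_of_mem p q ⟨hx0, hx1⟩]
        apply mul_le_mul_of_nonneg_left _ (by positivity)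
        apply Real.exp_le_exp.2
        have : B ≤ x ^ (-p) * B := le_mul_of_one_le_left hB0.le hA1
        linarith
      have h3 := aux_pow_mul_exp_neg_le M hM0 hB0.le
      have hstep2 : Real.exp (-B) ≤ (M:ℝ) ^ M * (B⁻¹) ^ M := by
        have hBMpos : (0:ℝ) < B ^ M := by positivity
        rw [inv_pow, ← div_eq_mul_inv, le_div_iff₀ hBMpos]
        calc Real.exp (-B) * B ^ M = B ^ M * Real.exp (-B) := by ring
          _ ≤ (M:ℝ) ^ M := h3
      have hBinv : B⁻¹ = (1 - x) ^ q := by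
        rw [hBdef, Real.rpow_neg hx1'.le, inv_inv]
      have hstep3 : (B⁻¹) ^ M ≤ 1 - x := by
        rw [hBinv]
        have e1 : ((1 - x) ^ q) ^ M = (1 - x) ^ (q * M) := by
          rw [← Real.rpow_natCast ((1 - x) ^ q) M, ← Real.rpow_mul hx1'.le]
        rw [e1]
        have h1qM : 1 ≤ q * M := by
          have := mul_le_mul_of_nonneg_left (hKq.trans hMK) hq.le
          rw [mul_inv_cancel₀ hq.ne'] at this
          exact this
        calc (1 - x) ^ (q * (M:ℝ)) ≤ (1 - x) ^ (1:ℝ) :=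
              Real.rpow_le_rpow_of_exponent_ge hx1' (by linarith) h1qM
          _ = 1 - x := Real.rpow_one _
      calc wpq p q x ≤ c⁻¹ * Real.exp (-B) := hstep1
        _ ≤ c⁻¹ * ((M:ℝ) ^ M * (B⁻¹) ^ M) := by
            apply mul_le_mul_of_nonneg_left hstep2 (by positivity)
        _ ≤ c⁻¹ * ((M:ℝ) ^ M * (1 - x)) := by
            apply mul_le_mul_of_nonneg_left _ (by positivity)
            apply mul_le_mul_of_nonneg_left hstep3 (by positivity)
        _ ≤ L * (1 - x) := by
            rw [hLdef]
            have : (0:ℝ) < c⁻¹ := by positivity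
            nlinarith [mul_nonneg (mul_nonneg (mul_nonneg
              (by linarith : (0:ℝ) ≤ p + q) this.le) (pow_pos hMpos M).le) hx1'.le]
  · -- y < 1 : mean value theorem on (0,1)
    have hmem_x : x ∈ Set.Ioo (0:ℝ) 1 := ⟨hx0, lt_of_le_of_lt hxy hy1'⟩
    have hmem_y : y ∈ Set.Ioo (0:ℝ) 1 := ⟨lt_of_lt_of_le hx0 hxy, hy1'⟩
    have hmvt := Convex.norm_image_sub_le_of_norm_hasDerivWithin_le
      hderiv hbound (convex_Ioo 0 1) hmem_x hmem_y
    rw [Real.norm_eq_abs, Real.norm_eq_abs, abs_sub_comm,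
      abs_of_nonneg (by linarith : (0:ℝ) ≤ y - x)] at hmvt
    calc |wpq p q x - wpq p q y| ≤ C * (y - x) := hmvt
      _ ≤ L * (y - x) := mul_le_mul_of_nonneg_right hCL (by linarith)

open scoped Classical in
lemma sum_spikes (g : ℕ → ℕ) (hg : Function.Injective g) (hg1 : ∀ k, 1 ≤ g k)
    (F : ℕ → ℝ) (N m : ℕ) (hm : ∀ k, g k ≤ N ↔ k < m) :
    ∑ n ∈ Finset.Icc 1 N, (if ∃ k, n = g k then F n else 0)
      = ∑ k ∈ Finset.range m, F (g k) := by
  have key : ∀ n ∈ Finset.Icc 1 N, (if ∃ k, n = g k then F n else 0)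
      = ∑ k ∈ Finset.range m, (if n = g k then F n else 0) := by
    intro n hn
    by_cases h : ∃ k, n = g k
    · obtain ⟨k0, rfl⟩ := h
      rw [if_pos ⟨k0, rfl⟩]
      have hk0 : k0 < m := (hm k0).1 (Finset.mem_Icc.mp hn).2
      have e1 : ∀ k ∈ Finset.range m,
          (if g k0 = g k then F (g k0) else 0) = (if k = k0 then F (g k0) else 0) := by
        intro k _
        apply if_congr _ rfl rfl
        constructor
        · intro h; exact (hg h).symm
        · intro h; rw [h]
      rw [Finset.sum_congr rfl e1, Finset.sum_ite_eq' (Finset.range m) k0 fun _ => F (g k0),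
        if_pos (Finset.mem_range.mpr hk0)]
    · rw [if_neg h]
      symm
      apply Finset.sum_eq_zero
      intro k _
      rw [if_neg fun hc => h ⟨k, hc⟩]
  rw [Finset.sum_congr rfl key, Finset.sum_comm]
  apply Finset.sum_congr rfl
  intro k hk
  rw [Finset.sum_ite_eq' (Finset.Icc 1 N) (g k) F,
    if_pos (Finset.mem_Icc.mpr ⟨hg1 k, (hm k).2 (Finset.mem_range.mp hk)⟩)]

open scoped Classical in
/-- The counterexample sequence: spikes `+4^k` at `n = 4^k` and `-4^k` at `n = 4^k + 1`. -/
noncomputable def cexSeq : ℕ → ℝ := fun n =>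
  (if ∃ k : ℕ, n = 4 ^ k then (n : ℝ) else 0)
    - (if ∃ k : ℕ, n = 4 ^ k + 1 then ((n : ℝ) - 1) else 0)

lemma pow4_injective : Function.Injective (fun k : ℕ => 4 ^ k) :=
  Nat.pow_right_injective (by norm_num)

lemma pow4succ_injective : Function.Injective (fun k : ℕ => 4 ^ k + 1) := by
  intro a b h
  simp only [add_left_inj] at h
  exact pow4_injective h

lemma pow4_one_le : ∀ k : ℕ, 1 ≤ 4 ^ k := fun k => Nat.one_le_pow _ _ (by norm_num)

lemma pow4succ_one_le : ∀ k : ℕ, 1 ≤ 4 ^ k + 1 := fun k => le_add_self.trans_eq rfl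

lemma cesaro_at_pow (K : ℕ) : ∑ n ∈ Finset.Icc 1 (4 ^ K), cexSeq n = (4:ℝ) ^ K := by
  classical
  have hmA : ∀ k, 4 ^ k ≤ 4 ^ K ↔ k < K + 1 := by
    intro k
    simp only [Nat.pow_le_pow_iff_right (by norm_num : 1 < 4)]
    omega
  have hmB : ∀ k, 4 ^ k + 1 ≤ 4 ^ K ↔ k < K := by
    intro k
    simp only [Nat.add_one_le_iff, Nat.pow_lt_pow_iff_right (by norm_num : 1 < 4)]
  unfold cexSeq
  rw [Finset.sum_sub_distrib,
    sum_spikes (fun k => 4 ^ k) pow4_injective pow4_one_le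
      (fun n => (n : ℝ)) (4 ^ K) (K + 1) hmA,
    sum_spikes (fun k => 4 ^ k + 1) pow4succ_injective pow4succ_one_le
      (fun n => (n : ℝ) - 1) (4 ^ K) K hmB]
  push_cast
  rw [Finset.sum_range_succ]
  simp only [add_sub_cancel_right]
  ring

lemma cesaro_at_two_pow (K : ℕ) : ∑ n ∈ Finset.Icc 1 (2 * 4 ^ K), cexSeq n = 0 := by
  classical
  have h4K : 1 ≤ 4 ^ K := pow4_one_le K
  have hmA : ∀ k, 4 ^ k ≤ 2 * 4 ^ K ↔ k < K + 1 := by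
    intro k
    constructor
    · intro h
      by_contra hk
      push_neg at hk
      have h1 : 4 ^ (K + 1) ≤ 4 ^ k := Nat.pow_le_pow_right (by norm_num) hk
      have h2 : 4 ^ (K + 1) = 4 * 4 ^ K := by rw [pow_succ]; ring
      omega
    · intro hk
      have h1 : 4 ^ k ≤ 4 ^ K := Nat.pow_le_pow_right (by norm_num) (by omega)
      omega
  have hmB : ∀ k, 4 ^ k + 1 ≤ 2 * 4 ^ K ↔ k < K + 1 := by
    intro k
    constructor
    · intro h
      by_contra hk
      push_neg at hk
      have h1 : 4 ^ (K + 1) ≤ 4 ^ k := Nat.pow_le_pow_right (by norm_num) hk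
      have h2 : 4 ^ (K + 1) = 4 * 4 ^ K := by rw [pow_succ]; ring
      omega
    · intro hk
      have h1 : 4 ^ k ≤ 4 ^ K := Nat.pow_le_pow_right (by norm_num) (by omega)
      omega
  unfold cexSeq
  rw [Finset.sum_sub_distrib,
    sum_spikes (fun k => 4 ^ k) pow4_injective pow4_one_le
      (fun n => (n : ℝ)) (2 * 4 ^ K) (K + 1) hmA,
    sum_spikes (fun k => 4 ^ k + 1) pow4succ_injective pow4succ_one_le
      (fun n => (n : ℝ) - 1) (2 * 4 ^ K) (K + 1) hmB]
  push_cast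
  simp only [add_sub_cancel_right]
  ring

lemma apq_nonneg (p q : ℝ) (N : ℕ) : 0 ≤ Apq p q N :=
  Finset.sum_nonneg fun n _ => wpq_nonneg p q _

lemma weighted_sum_bound (p q : ℝ) {L : ℝ} (hL : 0 < L)
    (hLip : ∀ x y : ℝ, 0 < x → x ≤ y → y ≤ 1 → |wpq p q x - wpq p q y| ≤ L * (y - x))
    {N : ℕ} (hN : 2 ≤ N) :
    |∑ n ∈ Finset.Icc 1 N, wpq p q ((n:ℝ)/N) * cexSeq n| ≤ 4 * L := by
  classical
  have hN0 : (0:ℝ) < N := by exact_mod_cast (by omega : 0 < N)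
  set m1 : ℕ := Nat.log 4 N + 1 with hm1def
  set m : ℕ := Nat.log 4 (N - 1) + 1 with hmdef
  have hm1 : ∀ k, 4 ^ k ≤ N ↔ k < m1 := by
    intro k
    rw [hm1def, Nat.lt_add_one_iff]
    exact (Nat.le_log_iff_pow_le (by norm_num) (by omega)).symm
  have hm : ∀ k, 4 ^ k + 1 ≤ N ↔ k < m := by
    intro k
    have h1 : 4 ^ k + 1 ≤ N ↔ 4 ^ k ≤ N - 1 := by omega
    rw [h1, hmdef, Nat.lt_add_one_iff]
    exact (Nat.le_log_iff_pow_le (by norm_num) (by omega)).symm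
  have hmpos : 0 < m := by rw [hmdef]; omega
  have hmm1 : m ≤ m1 := by
    rw [hmdef, hm1def]
    exact Nat.succ_le_succ (Nat.log_mono_right (by omega))
  have hsplit : ∑ n ∈ Finset.Icc 1 N, wpq p q ((n:ℝ)/N) * cexSeq n
      = (∑ n ∈ Finset.Icc 1 N,
            (if ∃ k, n = 4 ^ k then wpq p q ((n:ℝ)/N) * (n:ℝ) else 0))
        - ∑ n ∈ Finset.Icc 1 N,
            (if ∃ k, n = 4 ^ k + 1 then wpq p q ((n:ℝ)/N) * ((n:ℝ) - 1) else 0) := by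
    rw [← Finset.sum_sub_distrib]
    apply Finset.sum_congr rfl
    intro n _
    simp only [cexSeq, mul_sub, mul_ite, mul_zero]
  rw [hsplit,
    sum_spikes (fun k => 4 ^ k) pow4_injective pow4_one_le
      (fun n => wpq p q ((n:ℝ)/N) * (n:ℝ)) N m1 hm1,
    sum_spikes (fun k => 4 ^ k + 1) pow4succ_injective pow4succ_one_le
      (fun n => wpq p q ((n:ℝ)/N) * ((n:ℝ) - 1)) N m hm]
  have hdrop : ∑ k ∈ Finset.range m1, wpq p q (((4 ^ k : ℕ):ℝ)/N) * ((4 ^ k : ℕ):ℝ)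
      = ∑ k ∈ Finset.range m, wpq p q (((4 ^ k : ℕ):ℝ)/N) * ((4 ^ k : ℕ):ℝ) := by
    symm
    apply Finset.sum_subset (Finset.range_subset_range.mpr hmm1)
    intro k hk1 hk2
    have h1 : 4 ^ k ≤ N := (hm1 k).2 (Finset.mem_range.mp hk1)
    have h2 : ¬ (4 ^ k + 1 ≤ N) := fun hcon => hk2 (Finset.mem_range.mpr ((hm k).1 hcon))
    have h3 : 4 ^ k = N := by omega
    have h4 : ((4 ^ k : ℕ):ℝ)/N = 1 := by rw [h3]; exact div_self hN0.ne'
    rw [h4, wpq_one]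
    ring
  rw [hdrop, ← Finset.sum_sub_distrib]
  have hterm : ∀ k ∈ Finset.range m,
      |wpq p q (((4 ^ k : ℕ):ℝ)/N) * ((4 ^ k : ℕ):ℝ)
        - wpq p q (((4 ^ k + 1 : ℕ):ℝ)/N) * (((4 ^ k + 1 : ℕ):ℝ) - 1)|
      ≤ L / N * ((4 ^ k : ℕ):ℝ) := by
    intro k hk
    have hkN : 4 ^ k + 1 ≤ N := (hm k).2 (Finset.mem_range.mp hk)
    have hc1 : ((4 ^ k + 1 : ℕ):ℝ) - 1 = ((4 ^ k : ℕ):ℝ) := by push_cast; ring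
    have hp4 : (0:ℝ) < ((4 ^ k : ℕ):ℝ) := by
      exact_mod_cast Nat.pow_pos (n := k) (by norm_num : 0 < 4)
    rw [hc1, ← sub_mul, abs_mul, abs_of_nonneg hp4.le]
    have hx0 : (0:ℝ) < ((4 ^ k : ℕ):ℝ)/N := div_pos hp4 hN0
    have hxy : ((4 ^ k : ℕ):ℝ)/N ≤ ((4 ^ k + 1 : ℕ):ℝ)/N := by
      gcongr
      exact_mod_cast Nat.le_succ (4 ^ k)
    have hy1 : ((4 ^ k + 1 : ℕ):ℝ)/N ≤ 1 := by
      rw [div_le_one hN0]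
      exact_mod_cast hkN
    have hlip := hLip _ _ hx0 hxy hy1
    have hdiff : ((4 ^ k + 1 : ℕ):ℝ)/N - ((4 ^ k : ℕ):ℝ)/N = 1/N := by
      rw [div_sub_div_same]
      congr 1
      push_cast
      ring
    rw [hdiff] at hlip
    calc |wpq p q (((4 ^ k : ℕ):ℝ)/N) - wpq p q (((4 ^ k + 1 : ℕ):ℝ)/N)| * ((4 ^ k : ℕ):ℝ)
        ≤ (L * (1/N)) * ((4 ^ k : ℕ):ℝ) := mul_le_mul_of_nonneg_right hlip hp4.le
      _ = L / N * ((4 ^ k : ℕ):ℝ) := by ring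
  have geom : ∑ k ∈ Finset.range m, (4:ℝ) ^ k ≤ 4 ^ m := by
    rw [geom_sum_eq (by norm_num : (4:ℝ) ≠ 1) m]
    have h40 := pow_pos (by norm_num : (0:ℝ) < 4) m
    rw [show (4:ℝ) - 1 = 3 by norm_num, div_le_iff₀ (by norm_num : (0:ℝ) < 3)]
    linarith
  have hm1' : 4 ^ (m - 1) + 1 ≤ N := (hm (m - 1)).2 (by omega)
  have hnat : 4 ^ m ≤ 4 * N := by
    have e : 4 ^ m = 4 * 4 ^ (m - 1) := by
      conv_lhs => rw [show m = (m - 1) + 1 by omega]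
      rw [pow_succ]; ring
    omega
  have hreal : (4:ℝ) ^ m ≤ 4 * N := by exact_mod_cast hnat
  calc |∑ k ∈ Finset.range m, (wpq p q (((4 ^ k : ℕ):ℝ)/N) * ((4 ^ k : ℕ):ℝ)
          - wpq p q (((4 ^ k + 1 : ℕ):ℝ)/N) * (((4 ^ k + 1 : ℕ):ℝ) - 1))|
      ≤ ∑ k ∈ Finset.range m,
          |wpq p q (((4 ^ k : ℕ):ℝ)/N) * ((4 ^ k : ℕ):ℝ)
            - wpq p q (((4 ^ k + 1 : ℕ):ℝ)/N) * (((4 ^ k + 1 : ℕ):ℝ) - 1)| :=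
        Finset.abs_sum_le_sum_abs _ _
    _ ≤ ∑ k ∈ Finset.range m, L / N * ((4 ^ k : ℕ):ℝ) := Finset.sum_le_sum hterm
    _ = ∑ k ∈ Finset.range m, L / N * (4:ℝ) ^ k := by
        apply Finset.sum_congr rfl
        intro k _
        norm_cast
    _ = L / N * ∑ k ∈ Finset.range m, (4:ℝ) ^ k := (Finset.mul_sum _ _ _).symm
    _ ≤ L / N * (4:ℝ) ^ m := by
        apply mul_le_mul_of_nonneg_left geom (by positivity)
    _ ≤ L / N * (4 * N) := by
        apply mul_le_mul_of_nonneg_left hreal (by positivity)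
    _ = 4 * L := by field_simp

/-- Convergence of the weighted averages does not imply convergence of the unweighted
Birkhoff (Cesàro) averages: there is a real sequence whose weighted averages tend to `0`
while its Cesàro averages diverge. -/
theorem exists_weighted_tendsto_cesaro_not_tendsto
    (p q : ℝ) (hp : 0 < p) (hq : 0 < q) :
    ∃ a : ℕ → ℝ,
      Tendsto (fun N : ℕ =>
          (Apq p q N)⁻¹ * ∑ n ∈ Finset.Icc 1 N, wpq p q ((n : ℝ) / N) * a n)
        atTop (nhds 0) ∧
      ¬ ∃ L : ℝ, Tendsto (fun N : ℕ => (N : ℝ)⁻¹ * ∑ n ∈ Finset.Icc 1 N, a n)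
        atTop (nhds L) := by
  obtain ⟨L, hL, hLip⟩ := wpq_lipschitz p q hp hq
  refine ⟨cexSeq, ?_, ?_⟩
  · -- weighted averages tend to zero
    set m0 : ℝ := (cInt p q)⁻¹ * Real.exp (-((3:ℝ)^p * 3^q)) with hm0
    have hm0pos : 0 < m0 := by
      have := cInt_pos p q
      positivity
    apply squeeze_zero_norm' (a := fun N : ℕ => (24 * L / m0) / N)
    · filter_upwards [eventually_ge_atTop 4] with N hN
      have hN0 : (0:ℝ) < N := by exact_mod_cast (by omega : 0 < N)
      have hA := apq_lower p q hp hq hN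
      have hApos : (0:ℝ) < (N:ℝ)/6 * m0 := by positivity
      have hT := weighted_sum_bound p q hL hLip (by omega : 2 ≤ N)
      rw [Real.norm_eq_abs, abs_mul, abs_inv, abs_of_nonneg (apq_nonneg p q N)]
      have h5 : (Apq p q N)⁻¹ ≤ ((N:ℝ)/6 * m0)⁻¹ := by
        apply inv_anti₀ hApos hA
      calc (Apq p q N)⁻¹ * |∑ n ∈ Finset.Icc 1 N, wpq p q ((n:ℝ)/N) * cexSeq n|
          ≤ ((N:ℝ)/6 * m0)⁻¹ * (4 * L) :=
            mul_le_mul h5 hT (abs_nonneg _) (by positivity)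
        _ = (24 * L / m0) / N := by
            field_simp
            ring
    · exact tendsto_const_div_atTop_nhds_zero_nat _
  · rintro ⟨l, hl⟩
    have t1 : Tendsto (fun K : ℕ => 4 ^ K) atTop atTop :=
      tendsto_pow_atTop_atTop_of_one_lt (by norm_num)
    have h1 := hl.comp t1
    have h1' : Tendsto (fun _ : ℕ => (1:ℝ)) atTop (nhds l) := by
      apply Filter.Tendsto.congr _ h1
      intro K
      simp only [Function.comp_apply]
      rw [cesaro_at_pow K]
      have e : ((4 ^ K : ℕ):ℝ) = (4:ℝ) ^ K := by push_cast; ring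
      rw [e]
      exact inv_mul_cancel₀ (by positivity)
    have hl1 : l = 1 := tendsto_nhds_unique h1' tendsto_const_nhds
    have t2 : Tendsto (fun K : ℕ => 2 * 4 ^ K) atTop atTop := by
      apply tendsto_atTop_mono (fun K => Nat.le_mul_of_pos_left (4 ^ K) (by norm_num)) t1
    have h2 := hl.comp t2
    have h2' : Tendsto (fun _ : ℕ => (0:ℝ)) atTop (nhds l) := by
      apply Filter.Tendsto.congr _ h2
      intro K
      simp only [Function.comp_apply]
      rw [cesaro_at_two_pow K, mul_zero]
    have hl0 : l = 0 := tendsto_nhds_unique h2' tendsto_const_nhds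
    rw [hl1] at hl0
    norm_num at hl0
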